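/- Under the hypotheses of the self-dependent-cut lemma (similar τ-multi-polynomials p₁,…,pₙ with common neat abstraction), the composition ⟨p₁⋯pₙ⟩ := p₁ ∘ ⌈p₂⌉ ∘ ⋯ ∘ ⌈pₙ⌉ is iterative: every component ⟨p₁⋯pₙ⟩[i] depends only on self-dependent variables, and only on variables with index j ≤ i. -/

import Mathlib

open MvPolynomial

/-- Variable set for τ-polynomials: `n` program variables plus the extra variable τ. -/
abbrev Vn (n : ℕ) := Fin n ⊕ Unit

open Classical in
/-- The linear part `Lin(r)`: the sum of monomials of `r` of the form `a·xᵢ`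
(linear in a single program variable, τ-free). -/
noncomputable def linPart {n : ℕ} (r : MvPolynomial (Vn n) ℕ) : MvPolynomial (Vn n) ℕ :=
  ∑ m ∈ r.support.filter (fun m => ∃ i : Fin n, m = Finsupp.single (Sum.inl i) 1),
    monomial m (r.coeff m)

open Classical in
/-- The non-linear part `NonLin(r)`: all remaining monomials, so `r = Lin(r) + NonLin(r)`. -/
noncomputable def nonLinPart {n : ℕ} (r : MvPolynomial (Vn n) ℕ) : MvPolynomial (Vn n) ℕ :=
  ∑ m ∈ r.support.filter (fun m => ¬ ∃ i : Fin n, m = Finsupp.single (Sum.inl i) 1),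
    monomial m (r.coeff m)

/-- Evaluation of a τ-polynomial at `x ∈ ℕⁿ` and `τ = t`, as a real number. -/
noncomputable def evalR {n : ℕ} (r : MvPolynomial (Vn n) ℕ) (x : Fin n → ℕ) (t : ℕ) : ℝ :=
  aeval (Sum.elim (fun i => (x i : ℝ)) (fun _ => (t : ℝ))) r

/-- `c⋄r = Lin(r) + c·NonLin(r)`, evaluated at `(x, t)`. -/
noncomputable def cDia {n : ℕ} (c : ℝ) (r : MvPolynomial (Vn n) ℕ)
    (x : Fin n → ℕ) (t : ℕ) : ℝ :=
  evalR (linPart r) x t + c * evalR (nonLinPart r) x t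

/-- Composition `r ∘ p`: substitute `p[i]` for `xᵢ` in `r`, leaving τ fixed. -/
noncomputable def tcomp {n : ℕ} (r : MvPolynomial (Vn n) ℕ)
    (p : Fin n → MvPolynomial (Vn n) ℕ) : MvPolynomial (Vn n) ℕ :=
  bind₁ (Sum.elim p (fun _ => X (Sum.inr ()))) r

/-- Evaluation of a τ-multi-polynomial component over ℕ at `(x, t)`. -/
noncomputable def evalN {n : ℕ} (r : MvPolynomial (Vn n) ℕ) (x : Fin n → ℕ) (t : ℕ) : ℕ :=
  eval (Sum.elim x (fun _ => t)) r


/-- The abstraction map `α`: replace every nonzero coefficient by `1`. -/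
noncomputable def absP {σ : Type*} (p : MvPolynomial σ ℕ) : MvPolynomial σ ℕ :=
  ∑ m ∈ p.support, monomial m 1

/-- `⌊q⌋ = α(q[1/τ])`: substitute `1` for τ, then flatten coefficients to 0/1. -/
noncomputable def flat {n : ℕ} (q : MvPolynomial (Vn n) ℕ) : MvPolynomial (Fin n) ℕ :=
  absP (aeval (Sum.elim X (fun _ => 1)) q)

/-- Composition of τ-multi-polynomials: `(f ∘ g)[i] = f[i](g)`, τ fixed. -/
noncomputable def mpComp {n : ℕ} (f g : Fin n → MvPolynomial (Vn n) ℕ) :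
    Fin n → MvPolynomial (Vn n) ℕ :=
  fun i => tcomp (f i) g

open Classical in
/-- The self-dependent cut `⌈q⌉` relative to the common abstraction `A`:
self-dependent components are replaced by the identity `xᵢ`. -/
noncomputable def cutA {n : ℕ} (A : Fin n → MvPolynomial (Fin n) ℕ)
    (q : Fin n → MvPolynomial (Vn n) ℕ) : Fin n → MvPolynomial (Vn n) ℕ :=
  fun i => if i ∈ (A i).vars then X (Sum.inl i) else q i

/-- `chainMP A p ℓ = q_{ℓ+1} = p₁ ∘ ⌈p₂⌉ ∘ ⋯ ∘ ⌈p_{ℓ+1}⌉`. -/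
noncomputable def chainMP {n : ℕ} (A : Fin n → MvPolynomial (Fin n) ℕ)
    (p : ℕ → Fin n → MvPolynomial (Vn n) ℕ) :
    ℕ → Fin n → MvPolynomial (Vn n) ℕ
  | 0 => p 1
  | ℓ + 1 => mpComp (chainMP A p ℓ) (cutA A (p (ℓ + 2)))

noncomputable def resf {n : ℕ} (m : Vn n →₀ ℕ) : Fin n →₀ ℕ :=
  Finsupp.equivFunOnFinite.symm (fun k => m (Sum.inl k))

lemma resf_apply {n : ℕ} (m : Vn n →₀ ℕ) (k : Fin n) : resf m k = m (Sum.inl k) := rfl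

lemma aeval_elim_monomial {n : ℕ} (m : Vn n →₀ ℕ) (c : ℕ) :
    aeval (Sum.elim X (fun _ => (1 : MvPolynomial (Fin n) ℕ))) (monomial m c)
      = monomial (resf m) c := by
  rw [aeval_monomial, monomial_eq]
  rw [algebraMap_eq]
  congr 1
  rw [Finsupp.prod, Finsupp.prod,
      Finset.prod_subset (Finset.subset_univ m.support) (by
        intro x _ hx
        simp [Finsupp.notMem_support_iff.mp hx]),
      Finset.prod_subset (Finset.subset_univ (resf m).support) (by
        intro x _ hx
        simp [Finsupp.notMem_support_iff.mp hx])]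
  rw [Fintype.prod_sum_type]
  simp only [Sum.elim_inl, Sum.elim_inr, one_pow, Finset.prod_const_one, mul_one]
  exact Finset.prod_congr rfl (fun a _ => by rw [resf_apply])

lemma mem_vars_flat {n : ℕ} (q : MvPolynomial (Vn n) ℕ) (j : Fin n)
    (h : Sum.inl j ∈ q.vars) : j ∈ (flat q).vars := by
  rw [mem_vars] at h
  obtain ⟨m, hm, hj⟩ := h
  rw [Finsupp.mem_support_iff] at hj
  set s := aeval (Sum.elim X (fun _ => (1 : MvPolynomial (Fin n) ℕ))) q with hs
  have key : resf m ∈ s.support := by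
    rw [mem_support_iff, hs]
    conv_lhs => rw [q.as_sum]
    rw [map_sum]
    simp_rw [aeval_elim_monomial]
    rw [coeff_sum]
    simp_rw [coeff_monomial]
    intro h0
    rw [Finset.sum_eq_zero_iff] at h0
    have := h0 m hm
    rw [if_pos rfl] at this
    exact (mem_support_iff.mp hm) this
  have hsupp : (flat q).support = s.support := by
    classical
    ext μ
    rw [flat, ← hs, absP, mem_support_iff, coeff_sum]
    simp_rw [coeff_monomial]
    rw [Finset.sum_ite_eq' s.support μ (fun _ => (1:ℕ))]
    by_cases hμ : μ ∈ s.support <;> simp [hμ]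
  rw [mem_vars]
  exact ⟨resf m, hsupp ▸ key, by
    rw [Finsupp.mem_support_iff, resf_apply]; exact hj⟩

lemma chain_vars {n : ℕ} (A : Fin n → MvPolynomial (Fin n) ℕ)
    (p : ℕ → Fin n → MvPolynomial (Vn n) ℕ)
    (hsim : ∀ k, 1 ≤ k → k ≤ n → ∀ i, flat (p k i) = A i)
    (hneatDAG : ∀ i j : Fin n, j ∈ (A i).vars → j ≤ i) :
    ∀ ℓ : ℕ, ℓ + 1 ≤ n → ∀ i j : Fin n,
      (Sum.inl j : Vn n) ∈ (chainMP A p ℓ i).vars →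
      j ≤ i ∧ (j ∉ (A j).vars → j.val + ℓ < i.val) := by
  intro ℓ
  induction ℓ with
  | zero =>
    intro hℓ i j h
    rw [show chainMP A p 0 = p 1 from rfl] at h
    have hA : j ∈ (A i).vars := by
      have := mem_vars_flat _ _ h
      rwa [hsim 1 le_rfl (by omega) i] at this
    refine ⟨hneatDAG i j hA, fun hns => ?_⟩
    have hne : j ≠ i := by
      rintro rfl; exact hns hA
    have : j < i := lt_of_le_of_ne (hneatDAG i j hA) hne
    simpa using this
  | succ ℓ ih =>
    intro hℓ i j h
    have hℓ' : ℓ + 1 ≤ n := by omega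
    rw [show chainMP A p (ℓ+1) i = tcomp (chainMP A p ℓ i) (cutA A (p (ℓ+2))) from rfl,
      tcomp] at h
    obtain ⟨v, hv, hjv⟩ := mem_vars_bind₁ _ _ h
    match v with
    | Sum.inr u =>
      rw [Sum.elim_inr, vars_X] at hjv
      simp at hjv
    | Sum.inl k =>
      obtain ⟨hki, hk2⟩ := ih hℓ' i k hv
      rw [Sum.elim_inl, cutA] at hjv
      by_cases hsd : k ∈ (A k).vars
      · rw [if_pos hsd, vars_X] at hjv
        have : j = k := by simpa using hjv
        subst this
        exact ⟨hki, fun hns => absurd hsd hns⟩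
      · rw [if_neg hsd] at hjv
        have hA : j ∈ (A k).vars := by
          have := mem_vars_flat _ _ hjv
          rwa [hsim (ℓ+2) (by omega) hℓ k] at this
        have hjk : j ≤ k := hneatDAG k j hA
        refine ⟨le_trans hjk hki, fun hns => ?_⟩
        have hne : j ≠ k := by rintro rfl; exact hsd hA
        have hlt : j < k := lt_of_le_of_ne hjk hne
        have h2 := hk2 hsd
        have : j.val < k.val := hlt
        omega

/-- Under the hypotheses of the self-dependent-cut lemma, the full composition
`⟨p₁⋯pₙ⟩ = p₁ ∘ ⌈p₂⌉ ∘ ⋯ ∘ ⌈pₙ⌉` (here `chainMP A p (n-1)`) is iterative: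
every component depends only on self-dependent variables of index `≤ i`. -/
theorem stmt12 {n : ℕ} (hn : 1 ≤ n) (A : Fin n → MvPolynomial (Fin n) ℕ)
    (p : ℕ → Fin n → MvPolynomial (Vn n) ℕ)
    (hsim : ∀ k, 1 ≤ k → k ≤ n → ∀ i, flat (p k i) = A i)
    (hneatDAG : ∀ i j : Fin n, j ∈ (A i).vars → j ≤ i)
    (hneatSelf : ∀ i : Fin n, ∀ m ∈ (A i).support,
      m i ≠ 0 → m = Finsupp.single i 1) :
    ∀ i j : Fin n, (Sum.inl j : Vn n) ∈ (chainMP A p (n - 1) i).vars →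
      j ∈ (A j).vars ∧ j ≤ i := by
  intro i j h
  have := chain_vars A p hsim hneatDAG (n-1) (by omega) i j h
  obtain ⟨hle, h2⟩ := this
  refine ⟨?_, hle⟩
  by_contra hns
  have := h2 hns
  have hi : i.val < n := i.isLt
  omega
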